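/- For every integer p ≥ 2 and every ε > 0 there exist an integer q ≥ p and a constant c > 0 such that for every graph G with m ≥ 2 edges, the Ramsey number satisfies r(K_{p,q}, G) ≥ c · m^{p/(p+1) − ε}. -/

import Mathlib

open SimpleGraph Finset

/-- `G.ContainsCopy H` means the graph `G` contains a subgraph isomorphic to `H`,
i.e. there is an injective graph homomorphism from `H` into `G`. -/
def SimpleGraph.ContainsCopy {α β : Type*} (G : SimpleGraph α) (H : SimpleGraph β) : Prop :=
  ∃ f : H →g G, Function.Injective f

/-- `RamseyProp n H G` : every graph `Γ` on `n` vertices contains a copy of `H`,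
or its complement contains a copy of `G`. -/
def RamseyProp {α β : Type*} (n : ℕ) (H : SimpleGraph α) (G : SimpleGraph β) : Prop :=
  ∀ Γ : SimpleGraph (Fin n), Γ.ContainsCopy H ∨ Γᶜ.ContainsCopy G

/-- The Ramsey number `r(H, G)` : the least positive `n` such that every graph on `n`
vertices contains a copy of `H` or its complement contains a copy of `G`. -/
noncomputable def ramseyNumber {α β : Type*} (H : SimpleGraph α) (G : SimpleGraph β) : ℕ :=
  sInf {n : ℕ | 0 < n ∧ RamseyProp n H G}

/-! ### Auxiliary lemmas -/

lemma aux_not_ramseyProp_mono {α β : Type*} {H : SimpleGraph α} {G : SimpleGraph β} {k n : ℕ}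
    (hkn : k ≤ n) (h : ¬ RamseyProp n H G) : ¬ RamseyProp k H G := by
  intro hk
  apply h
  intro Γ
  set j : Fin k → Fin n := Fin.castLE hkn with hj
  have hjinj : Function.Injective j := Fin.castLE_injective hkn
  rcases hk (Γ.comap j) with ⟨f, hf⟩ | ⟨f, hf⟩
  · refine Or.inl ⟨⟨fun a => j (f a), fun hadj => f.map_rel' hadj⟩, hjinj.comp hf⟩
  · refine Or.inr ⟨⟨fun a => j (f a), fun hadj => ?_⟩, hjinj.comp hf⟩
    have := f.map_rel' hadj
    rw [compl_adj] at this ⊢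
    exact ⟨fun he => this.1 (hjinj he), fun ha => this.2 ha⟩

lemma aux_lt_ramseyNumber {α β : Type*} {H : SimpleGraph α} {G : SimpleGraph β} {n : ℕ}
    (hex : ∃ N, 0 < N ∧ RamseyProp N H G) (h : ¬ RamseyProp n H G) :
    n < ramseyNumber H G := by
  have hne : {n : ℕ | 0 < n ∧ RamseyProp n H G}.Nonempty := hex
  have hmem := Nat.sInf_mem hne
  by_contra hle
  push_neg at hle
  exact (aux_not_ramseyProp_mono hle h) hmem.2

lemma aux_one_le_ramseyNumber {α β : Type*} {H : SimpleGraph α} {G : SimpleGraph β}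
    (hex : ∃ N, 0 < N ∧ RamseyProp N H G) : 1 ≤ ramseyNumber H G :=
  (Nat.sInf_mem (hex : {n : ℕ | 0 < n ∧ RamseyProp n H G}.Nonempty)).1

lemma aux_ramsey_clique : ∀ (k s t : ℕ), s + t ≤ k →
    ∀ {V : Type} (Γ : SimpleGraph V) (U : Finset V), 2 ^ k ≤ U.card →
    (∃ A ⊆ U, A.card = s ∧ Γ.IsClique (A : Set V)) ∨
    (∃ B ⊆ U, B.card = t ∧ Γᶜ.IsClique (B : Set V)) := by
  intro k
  induction k with
  | zero =>
    intro s t hst V Γ U _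
    have hs : s = 0 := by omega
    subst hs
    exact Or.inl ⟨∅, empty_subset _, by simp, by simp⟩
  | succ k ih =>
    intro s t hst V Γ U hU
    classical
    rcases Nat.eq_zero_or_pos s with rfl | hs
    · exact Or.inl ⟨∅, empty_subset _, by simp, by simp⟩
    rcases Nat.eq_zero_or_pos t with rfl | ht
    · exact Or.inr ⟨∅, empty_subset _, by simp, by simp⟩
    have hUne : U.Nonempty := Finset.card_pos.mp (by
      have : 0 < 2 ^ (k+1) := Nat.pow_pos (by norm_num)
      omega)
    obtain ⟨v, hv⟩ := hUne
    set W := U.erase v with hW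
    have hWcard : U.card - 1 ≤ W.card := by
      rw [hW, Finset.card_erase_of_mem hv]
    set Nv := W.filter (fun w => Γ.Adj v w) with hNv
    set Mv := W.filter (fun w => ¬ Γ.Adj v w) with hMv
    have hsplit : Nv.card + Mv.card = W.card := Finset.card_filter_add_card_filter_not _
    have hpow : 2 ^ (k+1) = 2 ^ k + 2 ^ k := by ring
    have hcases : 2 ^ k ≤ Nv.card ∨ 2 ^ k ≤ Mv.card := by omega
    rcases hcases with hN | hM
    · rcases ih (s-1) t (by omega) Γ Nv hN with ⟨A, hAsub, hAcard, hAcl⟩ | ⟨B, hBsub, hBcard, hBcl⟩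
      · refine Or.inl ⟨insert v A, ?_, ?_, ?_⟩
        · intro x hx
          rcases Finset.mem_insert.mp hx with rfl | hx
          · exact hv
          · exact (Finset.erase_subset _ _) (Finset.mem_of_mem_filter _ (hAsub hx))
        · have hvA : v ∉ A := by
            intro hvA
            have := Finset.mem_of_mem_filter _ (hAsub hvA)
            exact (Finset.notMem_erase v U) this
          rw [Finset.card_insert_of_notMem hvA, hAcard]; omega
        · rw [Finset.coe_insert]
          refine hAcl.insert (fun b hb _ => ?_)
          have := hAsub hb
          rw [hNv, Finset.mem_filter] at this
          exact this.2
      · exact Or.inr ⟨B, fun x hx => (Finset.erase_subset _ _)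
          (Finset.mem_of_mem_filter _ (hBsub hx)), hBcard, hBcl⟩
    · rcases ih s (t-1) (by omega) Γ Mv hM with ⟨A, hAsub, hAcard, hAcl⟩ | ⟨B, hBsub, hBcard, hBcl⟩
      · exact Or.inl ⟨A, fun x hx => (Finset.erase_subset _ _)
          (Finset.mem_of_mem_filter _ (hAsub hx)), hAcard, hAcl⟩
      · refine Or.inr ⟨insert v B, ?_, ?_, ?_⟩
        · intro x hx
          rcases Finset.mem_insert.mp hx with rfl | hx
          · exact hv
          · exact (Finset.erase_subset _ _) (Finset.mem_of_mem_filter _ (hBsub hx))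
        · have hvB : v ∉ B := by
            intro hvB
            have := Finset.mem_of_mem_filter _ (hBsub hvB)
            exact (Finset.notMem_erase v U) this
          rw [Finset.card_insert_of_notMem hvB, hBcard]; omega
        · rw [Finset.coe_insert]
          refine hBcl.insert (fun b hb hne => ?_)
          have hb' := hBsub hb
          rw [hMv, Finset.mem_filter] at hb'
          exact ⟨hne, hb'.2⟩

lemma aux_ramseyProp_exists (p q : ℕ) (β : Type) [Fintype β] (G : SimpleGraph β) :
    ∃ N, 0 < N ∧ RamseyProp N (completeBipartiteGraph (Fin p) (Fin q)) G := by
  classical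
  set k := p + q + Fintype.card β with hk
  refine ⟨2 ^ k, Nat.pow_pos (by norm_num), fun Γ => ?_⟩
  have hcard : 2 ^ k ≤ (Finset.univ : Finset (Fin (2^k))).card := by simp
  rcases aux_ramsey_clique k (p+q) (Fintype.card β) (le_refl _) Γ Finset.univ hcard with
    ⟨A, _, hAcard, hAcl⟩ | ⟨B, _, hBcard, hBcl⟩
  · left
    set e := (A.orderIsoOfFin hAcard).toFun with he
    set f : Fin p ⊕ Fin q → Fin (2^k) := fun a => (e (finSumFinEquiv a) : Fin (2^k)) with hf
    have hfinj : Function.Injective f := by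
      intro a b hab
      apply finSumFinEquiv.injective
      apply (A.orderIsoOfFin hAcard).injective
      exact Subtype.ext hab
    refine ⟨⟨f, ?_⟩, hfinj⟩
    intro a b hab
    have hne : a ≠ b := by
      rcases hab with ⟨h1, h2⟩ | ⟨h1, h2⟩ <;>
      · rintro rfl
        simp_all [Sum.isLeft_iff, Sum.isRight_iff]
        aesop
    exact hAcl (e (finSumFinEquiv a)).2 (e (finSumFinEquiv b)).2 (fun hc => hne (hfinj hc))
  · right
    have hemb : Nonempty (β ↪ (B : Set (Fin (2^k)))) := by
      apply Function.Embedding.nonempty_of_card_le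
      simpa using hBcard.ge
    obtain ⟨g⟩ := hemb
    set f : β → Fin (2^k) := fun v => (g v : Fin (2^k)) with hf
    have hfinj : Function.Injective f := fun a b hab => g.injective (Subtype.ext hab)
    refine ⟨⟨f, fun hadj => hBcl (g _).2 (g _).2 (fun hc => (hadj.ne (hfinj hc)))⟩, hfinj⟩

lemma aux_not_ramseyProp_small {p q n : ℕ} (hn : n < p + q) {β : Type*} [Fintype β]
    (G : SimpleGraph β) (hedge : G.edgeSet.Nonempty) :
    ¬ RamseyProp n (completeBipartiteGraph (Fin p) (Fin q)) G := by
  intro h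
  rcases h ⊤ with ⟨f, hf⟩ | ⟨f, hf⟩
  · have := Fintype.card_le_of_injective f hf
    simp only [Fintype.card_sum, Fintype.card_fin] at this
    omega
  · obtain ⟨e, he⟩ := hedge
    revert he
    induction e using Sym2.ind with | _ u v =>
    intro he
    rw [SimpleGraph.mem_edgeSet] at he
    have hcompl := f.map_rel' he
    rw [SimpleGraph.compl_adj] at hcompl
    exact hcompl.2 (by rw [SimpleGraph.top_adj]; exact hcompl.1)

/-! ### The random graph construction -/

def mkGraph (n b : ℕ) (ω : Sym2 (Fin n) → Fin b) : SimpleGraph (Fin n) where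
  Adj x y := x ≠ y ∧ ((ω s(x, y) : ℕ) = 0)
  symm := ⟨fun x y h => ⟨h.1.symm, by rw [Sym2.eq_swap]; exact h.2⟩⟩
  loopless := ⟨fun x h => h.1 rfl⟩

lemma aux_card_eq0 (b : ℕ) (hb : 1 ≤ b) : Fintype.card {x : Fin b // (x : ℕ) = 0} = 1 := by
  rw [Fintype.card_eq_one_iff]
  exact ⟨⟨⟨0, hb⟩, rfl⟩, fun y => Subtype.ext (Fin.ext (by simpa using y.2))⟩

lemma aux_card_ne0 (b : ℕ) (hb : 1 ≤ b) :
    Fintype.card {x : Fin b // ¬ ((x : ℕ) = 0)} = b - 1 := by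
  rw [Fintype.card_subtype_compl, aux_card_eq0 b hb, Fintype.card_fin]

lemma aux_cyl_card {ι : Type*} [Fintype ι] [DecidableEq ι] {b : ℕ} (S : Finset ι)
    (P : Fin b → Prop) [DecidablePred P] :
    (Finset.univ.filter (fun ω : ι → Fin b => ∀ e ∈ S, P (ω e))).card ≤
      (Fintype.card {x : Fin b // P x}) ^ S.card * b ^ (Fintype.card ι - S.card) := by
  classical
  rw [← Fintype.card_subtype]
  have key : Fintype.card {ω : ι → Fin b // ∀ e ∈ S, P (ω e)} ≤
      Fintype.card ((({e // e ∈ S}) → {x : Fin b // P x}) × (({e // e ∈ Sᶜ}) → Fin b)) := by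
    apply Fintype.card_le_of_injective
      (fun ω => (fun e => ⟨ω.1 e.1, ω.2 e.1 e.2⟩, fun e => ω.1 e.1))
    intro ω₁ ω₂ h
    have h1 := congrArg Prod.fst h
    have h2 := congrArg Prod.snd h
    apply Subtype.ext
    funext e
    by_cases he : e ∈ S
    · exact congrArg Subtype.val (congrFun h1 ⟨e, he⟩)
    · exact congrFun h2 ⟨e, Finset.mem_compl.mpr he⟩
  calc Fintype.card {ω : ι → Fin b // ∀ e ∈ S, P (ω e)} ≤ _ := key
    _ = (Fintype.card {x : Fin b // P x}) ^ S.card * b ^ (Fintype.card ι - S.card) := by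
        rw [Fintype.card_prod, Fintype.card_fun, Fintype.card_fun]
        congr 1
        · congr 1
          simp [Fintype.card_coe]
        · rw [Fintype.card_fin]
          congr 1
          simp [Fintype.card_coe, Finset.card_compl]

lemma aux_stepA (p q n b : ℕ) (hb : 1 ≤ b)
    [DecidablePred (fun ω : Sym2 (Fin n) → Fin b =>
      (mkGraph n b ω).ContainsCopy (completeBipartiteGraph (Fin p) (Fin q)))] :
    (Finset.univ.filter (fun ω : Sym2 (Fin n) → Fin b =>
      (mkGraph n b ω).ContainsCopy (completeBipartiteGraph (Fin p) (Fin q)))).card ≤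
    n ^ (p + q) * b ^ (Fintype.card (Sym2 (Fin n)) - p * q) := by
  classical
  set N := Fintype.card (Sym2 (Fin n))
  set Sf : ((Fin p ⊕ Fin q) ↪ Fin n) → Finset (Sym2 (Fin n)) := fun f =>
    Finset.image (fun ij : Fin p × Fin q => s(f (Sum.inl ij.1), f (Sum.inr ij.2))) Finset.univ
    with hSf
  have hsub : (Finset.univ.filter (fun ω : Sym2 (Fin n) → Fin b =>
      (mkGraph n b ω).ContainsCopy (completeBipartiteGraph (Fin p) (Fin q)))) ⊆
      Finset.univ.biUnion (fun f : (Fin p ⊕ Fin q) ↪ Fin n =>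
        Finset.univ.filter (fun ω => ∀ e ∈ Sf f, (ω e : ℕ) = 0)) := by
    intro ω hω
    rw [Finset.mem_filter] at hω
    obtain ⟨-, f, hfinj⟩ := hω
    rw [Finset.mem_biUnion]
    refine ⟨⟨⇑f, hfinj⟩, Finset.mem_univ _, ?_⟩
    rw [Finset.mem_filter]
    refine ⟨Finset.mem_univ _, fun e he => ?_⟩
    rw [hSf] at he
    simp only [Finset.mem_image, Finset.mem_univ, true_and, Function.Embedding.coeFn_mk] at he
    obtain ⟨⟨i, j⟩, rfl⟩ := he
    have hadj : (completeBipartiteGraph (Fin p) (Fin q)).Adj (Sum.inl i) (Sum.inr j) := by simp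
    have h2 : f (Sum.inl i) ≠ f (Sum.inr j) ∧
        ((ω s(f (Sum.inl i), f (Sum.inr j)) : ℕ) = 0) := f.map_rel' hadj
    exact h2.2
  have hSfcard : ∀ f : (Fin p ⊕ Fin q) ↪ Fin n, (Sf f).card = p * q := by
    intro f
    rw [hSf]
    rw [Finset.card_image_of_injective _ ?_, Finset.card_univ, Fintype.card_prod,
      Fintype.card_fin, Fintype.card_fin]
    rintro ⟨i, j⟩ ⟨i', j'⟩ h
    simp only [Sym2.eq_iff] at h
    rcases h with ⟨h1, h2⟩ | ⟨h1, h2⟩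
    · have := f.injective h1
      have := f.injective h2
      simp_all
    · exact absurd (f.injective h1) (by simp)
  calc _ ≤ _ := Finset.card_le_card hsub
    _ ≤ ∑ f : (Fin p ⊕ Fin q) ↪ Fin n,
        (Finset.univ.filter (fun ω : Sym2 (Fin n) → Fin b => ∀ e ∈ Sf f, (ω e : ℕ) = 0)).card :=
      Finset.card_biUnion_le
    _ ≤ ∑ f : (Fin p ⊕ Fin q) ↪ Fin n,
        (Fintype.card {x : Fin b // (x : ℕ) = 0}) ^ (Sf f).card * b ^ (N - (Sf f).card) := by
        apply Finset.sum_le_sum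
        intro f _
        exact aux_cyl_card (Sf f) (fun x => (x : ℕ) = 0)
    _ = ∑ _f : (Fin p ⊕ Fin q) ↪ Fin n, b ^ (N - p * q) := by
        apply Finset.sum_congr rfl
        intro f _
        rw [hSfcard f, aux_card_eq0 b hb, one_pow, one_mul]
    _ = Fintype.card ((Fin p ⊕ Fin q) ↪ Fin n) * b ^ (N - p * q) := by
        rw [Finset.sum_const, Finset.card_univ, smul_eq_mul]
    _ ≤ n ^ (p + q) * b ^ (N - p * q) := by
        apply Nat.mul_le_mul_right
        calc Fintype.card ((Fin p ⊕ Fin q) ↪ Fin n)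
            ≤ Fintype.card ((Fin p ⊕ Fin q) → Fin n) :=
              Fintype.card_le_of_injective _ DFunLike.coe_injective
          _ = n ^ (p + q) := by
              rw [Fintype.card_fun, Fintype.card_fin, Fintype.card_sum, Fintype.card_fin,
                Fintype.card_fin]

lemma aux_stepB (n b : ℕ) (hn : 0 < n) (hb : 1 ≤ b) (β : Type) [Fintype β] (G : SimpleGraph β)
    (m : ℕ) (hm : G.edgeSet.ncard = m)
    [DecidablePred (fun ω : Sym2 (Fin n) → Fin b => (mkGraph n b ω)ᶜ.ContainsCopy G)] :
    (Nonempty ({v : β // ∃ w, G.Adj v w} ↪ Fin n) → m ≤ Fintype.card (Sym2 (Fin n))) ∧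
    (Finset.univ.filter (fun ω : Sym2 (Fin n) → Fin b =>
      (mkGraph n b ω)ᶜ.ContainsCopy G)).card ≤
      Nat.card ({v : β // ∃ w, G.Adj v w} ↪ Fin n) *
        ((b-1) ^ m * b ^ (Fintype.card (Sym2 (Fin n)) - m)) := by
  classical
  rw [Nat.card_eq_fintype_card]
  set N := Fintype.card (Sym2 (Fin n))
  set σ := {v : β // ∃ w, G.Adj v w} with hσ
  set ES : Finset (Sym2 β) := G.edgeSet.toFinset with hES
  have hEScard : ES.card = m := by rw [hES, ← Set.ncard_eq_toFinset_card']; exact hm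
  set ext : (σ ↪ Fin n) → β → Fin n := fun g v =>
    if h : ∃ w, G.Adj v w then g ⟨v, h⟩ else ⟨0, hn⟩ with hext
  have hext_inj : ∀ (g : σ ↪ Fin n) (x y : β), (∃ w, G.Adj x w) → (∃ w, G.Adj y w) →
      ext g x = ext g y → x = y := by
    intro g x y hx hy h
    rw [hext] at h
    simp only [dif_pos hx, dif_pos hy] at h
    exact congrArg Subtype.val (g.injective h)
  set Sg : (σ ↪ Fin n) → Finset (Sym2 (Fin n)) := fun g => ES.image (Sym2.map (ext g))
    with hSg
  have hSgcard : ∀ g : σ ↪ Fin n, (Sg g).card = m := by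
    intro g
    rw [hSg, ← hEScard]
    apply Finset.card_image_of_injOn
    intro e₁ h₁ e₂ h₂ h
    revert h₁ h₂ h
    induction e₁ using Sym2.ind with | _ u v =>
    induction e₂ using Sym2.ind with | _ u' v' =>
    intro h₁ h₂ h
    simp only [Finset.mem_coe, hES, Set.mem_toFinset, SimpleGraph.mem_edgeSet] at h₁ h₂
    rw [Sym2.map_pair_eq, Sym2.map_pair_eq, Sym2.eq_iff] at h
    rcases h with ⟨ha, hb'⟩ | ⟨ha, hb'⟩
    · rw [hext_inj g _ _ ⟨v, h₁⟩ ⟨v', h₂⟩ ha, hext_inj g _ _ ⟨u, h₁.symm⟩ ⟨u', h₂.symm⟩ hb']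
    · rw [Sym2.eq_swap]
      rw [hext_inj g _ _ ⟨v, h₁⟩ ⟨u', h₂.symm⟩ ha, hext_inj g _ _ ⟨u, h₁.symm⟩ ⟨v', h₂⟩ hb']
  constructor
  · rintro ⟨g⟩
    calc m = (Sg g).card := (hSgcard g).symm
      _ ≤ (Finset.univ : Finset (Sym2 (Fin n))).card := Finset.card_le_card (Finset.subset_univ _)
      _ = N := Finset.card_univ
  have hsub : (Finset.univ.filter (fun ω : Sym2 (Fin n) → Fin b =>
      (mkGraph n b ω)ᶜ.ContainsCopy G)) ⊆
      Finset.univ.biUnion (fun g : σ ↪ Fin n =>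
        Finset.univ.filter (fun ω => ∀ e ∈ Sg g, ¬ ((ω e : ℕ) = 0))) := by
    intro ω hω
    rw [Finset.mem_filter] at hω
    obtain ⟨-, f, hfinj⟩ := hω
    rw [Finset.mem_biUnion]
    refine ⟨⟨fun v => f v.1, fun a b' h => Subtype.ext (hfinj h)⟩, Finset.mem_univ _, ?_⟩
    rw [Finset.mem_filter]
    refine ⟨Finset.mem_univ _, fun e he => ?_⟩
    rw [hSg] at he
    simp only [Finset.mem_image] at he
    obtain ⟨e₀, he₀, rfl⟩ := he
    revert he₀
    induction e₀ using Sym2.ind with | _ u v =>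
    intro he₀
    rw [hES, Set.mem_toFinset, SimpleGraph.mem_edgeSet] at he₀
    have hu : ∃ w, G.Adj u w := ⟨v, he₀⟩
    have hv : ∃ w, G.Adj v w := ⟨u, he₀.symm⟩
    have hmap : Sym2.map (ext ⟨fun v => f v.1, fun a b' h => Subtype.ext (hfinj h)⟩) s(u, v)
        = s(f u, f v) := by
      rw [Sym2.map_pair_eq, hext]
      simp only [dif_pos hu, dif_pos hv, Function.Embedding.coeFn_mk]
      rfl
    rw [hmap]
    have hc := f.map_rel' he₀
    rw [SimpleGraph.compl_adj] at hc
    intro h0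
    exact hc.2 ⟨hc.1, h0⟩
  calc _ ≤ _ := Finset.card_le_card hsub
    _ ≤ ∑ g : σ ↪ Fin n,
        (Finset.univ.filter (fun ω : Sym2 (Fin n) → Fin b => ∀ e ∈ Sg g, ¬((ω e : ℕ) = 0))).card :=
      Finset.card_biUnion_le
    _ ≤ ∑ g : σ ↪ Fin n,
        (Fintype.card {x : Fin b // ¬ ((x : ℕ) = 0)}) ^ (Sg g).card * b ^ (N - (Sg g).card) := by
        apply Finset.sum_le_sum
        intro g _
        exact aux_cyl_card (Sg g) (fun x => ¬ ((x : ℕ) = 0))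
    _ = ∑ _g : σ ↪ Fin n, (b - 1) ^ m * b ^ (N - m) := by
        apply Finset.sum_congr rfl
        intro g _
        rw [hSgcard g, aux_card_ne0 b hb]
    _ = Fintype.card (σ ↪ Fin n) * ((b - 1) ^ m * b ^ (N - m)) := by
        rw [Finset.sum_const, Finset.card_univ, smul_eq_mul]

lemma aux_key2 (ν pd d m : ℕ) (hν : 2 ≤ ν) (hpd : 1 ≤ pd)
    (hm : (pd + 1) * ν ^ (pd + d + 2) ≤ m) :
    2 * (ν ^ pd) ^ (ν ^ pd) * (ν ^ (d + 1) - 1) ^ m ≤ (ν ^ (d + 1)) ^ m := by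
  set n : ℕ := ν ^ pd with hn
  set b : ℕ := ν ^ (d + 1) with hb
  have hb2 : 2 ≤ b := by
    calc 2 = 2 ^ 1 := by norm_num
    _ ≤ ν ^ (d+1) := (Nat.pow_le_pow_left hν 1).trans (Nat.pow_le_pow_right (by omega) (by omega))
  have hn2 : 2 ≤ n := by
    calc 2 = 2 ^ 1 := by norm_num
    _ ≤ ν ^ pd := (Nat.pow_le_pow_left hν 1).trans (Nat.pow_le_pow_right (by omega) hpd)
  have hb1 : 1 ≤ b := by omega
  rw [← @Nat.cast_le ℝ]
  push_cast [Nat.cast_sub hb1]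
  have hB0 : (0:ℝ) < (b:ℝ) := by positivity
  have hB2 : (2:ℝ) ≤ (b:ℝ) := by exact_mod_cast hb2
  have hn0 : (0:ℝ) < (n:ℝ) := by positivity
  have hstep1 : ((b:ℝ) - 1) ^ m ≤ (b:ℝ) ^ m * Real.exp (-(m / (b:ℝ))) := by
    have h1 : (b:ℝ) - 1 = (b:ℝ) * (1 - 1/(b:ℝ)) := by field_simp
    have h2 : (0:ℝ) ≤ 1 - 1/(b:ℝ) := by
      rw [sub_nonneg, div_le_one hB0]; linarith
    have h3 : (1 - 1/(b:ℝ)) ≤ Real.exp (-(1/(b:ℝ))) := by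
      have := Real.add_one_le_exp (-(1/(b:ℝ))); linarith
    calc ((b:ℝ) - 1)^m = (b:ℝ)^m * (1 - 1/(b:ℝ))^m := by rw [h1, mul_pow]
      _ ≤ (b:ℝ)^m * (Real.exp (-(1/(b:ℝ))))^m :=
          mul_le_mul_of_nonneg_left (pow_le_pow_left₀ h2 h3 m) (by positivity)
      _ = (b:ℝ)^m * Real.exp (-(m / (b:ℝ))) := by
          rw [← Real.exp_nat_mul]
          congr 1
          field_simp
  have hstep2 : 2 * (n:ℝ) ^ n ≤ Real.exp (1 + n * Real.log (n:ℝ)) := by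
    have h2e : (2:ℝ) ≤ Real.exp 1 := by
      have := Real.add_one_le_exp 1; linarith
    have hnn : (n:ℝ) ^ n = Real.exp (n * Real.log (n:ℝ)) := by
      rw [← Real.log_pow, Real.exp_log (by positivity)]
    rw [Real.exp_add, hnn]
    exact mul_le_mul_of_nonneg_right h2e (by positivity)
  have hν1 : (1:ℝ) ≤ (ν:ℝ) := by exact_mod_cast (by omega : 1 ≤ ν)
  have hexp : 1 + (n:ℝ) * Real.log (n:ℝ) ≤ m / (b:ℝ) := by
    have hlog : Real.log (n:ℝ) ≤ (pd : ℝ) * ((ν:ℝ) - 1) := by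
      rw [hn]
      push_cast
      rw [Real.log_pow]
      have h4 : Real.log (ν:ℝ) ≤ (ν:ℝ) - 1 := by
        have := Real.log_le_sub_one_of_pos (x := (ν:ℝ)) (by positivity)
        linarith
      have hpd0 : (0:ℝ) ≤ (pd:ℝ) := by positivity
      nlinarith
    have h1 : (n:ℝ) * ((ν:ℝ) - 1) ≤ (ν:ℝ)^(pd+1) := by
      have : (n:ℝ) * ((ν:ℝ) - 1) ≤ (n:ℝ) * (ν:ℝ) :=
        mul_le_mul_of_nonneg_left (by linarith) (by positivity)
      calc (n:ℝ) * ((ν:ℝ) - 1) ≤ (n:ℝ) * (ν:ℝ) := this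
        _ = (ν:ℝ)^(pd+1) := by rw [hn]; push_cast; rw [pow_succ]
    have h2 : (1:ℝ) ≤ (ν:ℝ)^(pd+1) := one_le_pow₀ hν1
    have hpd0 : (0:ℝ) ≤ (pd:ℝ) := by positivity
    have hkey : 1 + (n:ℝ) * ((pd:ℝ) * ((ν:ℝ)-1)) ≤ ((pd:ℝ)+1) * (ν:ℝ)^(pd+1) := by
      nlinarith
    have hmB : ((pd:ℝ)+1) * (ν:ℝ)^(pd+1) ≤ (m:ℝ) / (b:ℝ) := by
      rw [le_div_iff₀ hB0, hb]
      push_cast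
      calc ((pd:ℝ)+1) * (ν:ℝ)^(pd+1) * (ν:ℝ)^(d+1) = ((pd:ℝ)+1) * (ν:ℝ)^(pd+d+2) := by ring
        _ ≤ (m:ℝ) := by exact_mod_cast hm
    have hlogmul : (n:ℝ) * Real.log (n:ℝ) ≤ (n:ℝ) * ((pd:ℝ) * ((ν:ℝ)-1)) :=
      mul_le_mul_of_nonneg_left hlog (by positivity)
    linarith
  calc 2 * (n:ℝ) ^ n * ((b:ℝ) - 1) ^ m
      ≤ Real.exp (1 + n * Real.log (n:ℝ)) * ((b:ℝ)^m * Real.exp (-(m/(b:ℝ)))) :=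
        mul_le_mul hstep2 hstep1 (pow_nonneg (by linarith) m) (by positivity)
    _ = (b:ℝ)^m * (Real.exp (1 + n * Real.log (n:ℝ)) * Real.exp (-(m/(b:ℝ)))) := by ring
    _ = (b:ℝ)^m * Real.exp ((1 + n * Real.log (n:ℝ)) + -(m/(b:ℝ))) := by rw [← Real.exp_add]
    _ ≤ (b:ℝ)^m * 1 := by
        apply mul_le_mul_of_nonneg_left _ (by positivity)
        rw [Real.exp_le_one_iff]
        linarith
    _ = (b:ℝ)^m := mul_one _

lemma counting_core (p q D ν : ℕ) (hp : 2 ≤ p) (hD : 1 ≤ D) (hq : q = D * (p + 2)) (hν : 2 ≤ ν)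
    (β : Type) [Fintype β] (G : SimpleGraph β) (m : ℕ) (hm : G.edgeSet.ncard = m)
    (hpqn : p + q ≤ ν ^ (p * D)) (hmm : (p * D + 1) * ν ^ (p * D + D + 2) ≤ m) :
    ¬ RamseyProp (ν ^ (p * D)) (completeBipartiteGraph (Fin p) (Fin q)) G := by
  classical
  intro hR
  set n := ν ^ (p * D) with hn
  set b := ν ^ (D + 1) with hb
  have hν1 : 1 ≤ ν := by omega
  have hpD1 : 1 ≤ p * D := Nat.mul_pos (by omega) (by omega)
  have hn1 : 0 < n := by positivity
  have hb1 : 1 ≤ b := Nat.one_le_pow _ _ (by omega)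
  have hq4 : 4 ≤ p + q := by
    have : p ≤ q := by
      rw [hq]
      calc p ≤ p + 2 := by omega
        _ = 1 * (p + 2) := (one_mul _).symm
        _ ≤ D * (p + 2) := Nat.mul_le_mul_right _ hD
    omega
  have hn2 : 2 ≤ n := by omega
  set N := Fintype.card (Sym2 (Fin n)) with hN
  set badH := Finset.univ.filter (fun ω : Sym2 (Fin n) → Fin b =>
    (mkGraph n b ω).ContainsCopy (completeBipartiteGraph (Fin p) (Fin q))) with hbadH
  set badG := Finset.univ.filter (fun ω : Sym2 (Fin n) → Fin b =>
    (mkGraph n b ω)ᶜ.ContainsCopy G) with hbadG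
  have hA : badH.card ≤ n ^ (p + q) * b ^ (N - p * q) := aux_stepA p q n b hb1
  obtain ⟨hmN', hB⟩ := aux_stepB n b hn1 hb1 β G m hm
  -- p * q ≤ N
  have hpqN : p * q ≤ N := by
    have hsym : N = Nat.choose (n + 1) 2 := by
      rw [hN, Sym2.card, Fintype.card_fin]
    have h2 : 2 * (p * q) ≤ (n + 1) * n := by
      have hsq : 2 * (p * q) ≤ (p + q) * (p + q) := by nlinarith
      calc 2 * (p * q) ≤ (p + q) * (p + q) := hsq
        _ ≤ (n + 1) * n := Nat.mul_le_mul (by omega) hpqn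
    rw [hsym, Nat.choose_two_right]
    simp only [Nat.add_sub_cancel]
    exact (Nat.le_div_iff_mul_le (by norm_num)).mpr (by linarith [h2])
  have h4n : 4 * n ^ (p + q) ≤ b ^ (p * q) := by
    have hexp1 : p * D * (p + q) + 2 ≤ (D + 1) * (p * q) := by
      subst hq
      have hid : (D+1) * (p * (D * (p+2))) = p * D * (p + D * (p+2)) + 2 * (p * D) := by ring
      linarith [hid, hpD1]
    calc 4 * n ^ (p + q) = 4 * ν ^ (p * D * (p + q)) := by rw [hn, ← pow_mul]
      _ ≤ ν ^ 2 * ν ^ (p * D * (p + q)) := Nat.mul_le_mul_right _ (by nlinarith)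
      _ = ν ^ (p * D * (p + q) + 2) := by rw [← pow_add, Nat.add_comm]
      _ ≤ ν ^ ((D + 1) * (p * q)) := Nat.pow_le_pow_right hν1 hexp1
      _ = b ^ (p * q) := by rw [hb, ← pow_mul]
  have h4A : 4 * badH.card ≤ b ^ N := by
    calc 4 * badH.card ≤ 4 * (n ^ (p + q) * b ^ (N - p * q)) := Nat.mul_le_mul_left _ hA
      _ = (4 * n ^ (p + q)) * b ^ (N - p * q) := by ring
      _ ≤ b ^ (p * q) * b ^ (N - p * q) := Nat.mul_le_mul_right _ h4n
      _ = b ^ N := by rw [← pow_add]; congr 1; omega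
  have h2B : 2 * badG.card ≤ b ^ N := by
    rcases Nat.eq_zero_or_pos (Nat.card ({v : β // ∃ w, G.Adj v w} ↪ Fin n)) with h0 | hpos
    · rw [h0, zero_mul] at hB
      have hz : badG.card = 0 := Nat.le_zero.mp hB
      rw [hz, Nat.mul_zero]
      exact Nat.zero_le _
    · obtain ⟨g₀⟩ := Nat.card_pos_iff.mp hpos |>.1
      have hmN : m ≤ N := hmN' ⟨g₀⟩
      have hσn : Fintype.card {v : β // ∃ w, G.Adj v w} ≤ n := by
        simpa using Fintype.card_le_of_injective g₀ g₀.injective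
      have hK : Nat.card ({v : β // ∃ w, G.Adj v w} ↪ Fin n) ≤ n ^ n := by
        rw [Nat.card_eq_fintype_card]
        calc Fintype.card ({v : β // ∃ w, G.Adj v w} ↪ Fin n)
            ≤ Fintype.card ({v : β // ∃ w, G.Adj v w} → Fin n) :=
              Fintype.card_le_of_injective _ DFunLike.coe_injective
          _ = n ^ (Fintype.card {v : β // ∃ w, G.Adj v w}) := by
              rw [Fintype.card_fun, Fintype.card_fin]
          _ ≤ n ^ n := Nat.pow_le_pow_right (by omega) hσn
      have hkey := aux_key2 ν (p * D) D m hν hpD1 hmm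
      calc 2 * badG.card ≤ 2 * (n ^ n * ((b - 1) ^ m * b ^ (N - m))) :=
            Nat.mul_le_mul_left _ (hB.trans (Nat.mul_le_mul_right _ hK))
        _ = (2 * n ^ n * (b - 1) ^ m) * b ^ (N - m) := by ring
        _ ≤ b ^ m * b ^ (N - m) := Nat.mul_le_mul_right _ hkey
        _ = b ^ N := by rw [← pow_add]; congr 1; omega
  have hΩ : Fintype.card (Sym2 (Fin n) → Fin b) = b ^ N := by
    rw [Fintype.card_fun, Fintype.card_fin]
  have hbN1 : 1 ≤ b ^ N := Nat.one_le_pow _ _ (by omega)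
  obtain ⟨ω, hω1, hω2⟩ : ∃ ω, ω ∉ badH ∧ ω ∉ badG := by
    by_contra hcon
    push_neg at hcon
    have hsubU : (Finset.univ : Finset (Sym2 (Fin n) → Fin b)) ⊆ badH ∪ badG := by
      intro ω _
      by_cases hω : ω ∈ badH
      · exact Finset.mem_union_left _ hω
      · exact Finset.mem_union_right _ (hcon ω hω)
    have h1 := Finset.card_le_card hsubU
    rw [Finset.card_univ, hΩ] at h1
    have h2 := Finset.card_union_le badH badG
    omega
  rcases hR (mkGraph n b ω) with hc | hc
  · exact hω1 (Finset.mem_filter.mpr ⟨Finset.mem_univ _, hc⟩)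
  · exact hω2 (Finset.mem_filter.mpr ⟨Finset.mem_univ _, hc⟩)

lemma aux_alphaE (p D : ℕ) (ε : ℝ) (hp : 2 ≤ p) (hε : 0 < ε) (hD4 : 4 / ε ≤ (D : ℝ))
    (hD1 : 1 ≤ D) :
    ((p:ℝ)/((p:ℝ)+1) - ε) * (((p * D + D + 2 : ℕ):ℝ) / ((p * D : ℕ):ℝ)) ≤ 1 := by
  have hP : (2:ℝ) ≤ (p:ℝ) := by exact_mod_cast hp
  have hDr : (1:ℝ) ≤ (D:ℝ) := by exact_mod_cast hD1
  have hpD0 : (0:ℝ) < (p:ℝ) * (D:ℝ) := by nlinarith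
  have hεD : 4 ≤ ε * (D:ℝ) := by
    rw [div_le_iff₀ hε] at hD4
    linarith [hD4]
  push_cast
  have key : ((p:ℝ) - ε*((p:ℝ)+1)) * ((p:ℝ)*(D:ℝ) + (D:ℝ) + 2) ≤ ((p:ℝ)+1)*((p:ℝ)*(D:ℝ)) := by
    have h1 : 4 * ((p:ℝ)*((p:ℝ)+1)) ≤ (ε*(D:ℝ)) * ((p:ℝ)*((p:ℝ)+1)) :=
      mul_le_mul_of_nonneg_right hεD (by positivity)
    have h2 : (0:ℝ) ≤ ε*((p:ℝ)+1)*((D:ℝ)+2) := by positivity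
    nlinarith [h1, h2, hP]
  have heq : ((p:ℝ)/((p:ℝ)+1) - ε) = ((p:ℝ) - ε*((p:ℝ)+1))/((p:ℝ)+1) := by
    field_simp
  rw [heq, div_mul_div_comm, div_le_one (by positivity)]
  calc ((p:ℝ) - ε * ((p:ℝ) + 1)) * ((p:ℝ) * (D:ℝ) + (D:ℝ) + 2)
      ≤ ((p:ℝ)+1)*((p:ℝ)*(D:ℝ)) := key
    _ = ((p:ℝ) + 1) * ((p:ℝ) * (D:ℝ)) := rfl

theorem stmt_14 (p : ℕ) (hp : 2 ≤ p) (ε : ℝ) (hε : 0 < ε) :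
    ∃ q : ℕ, p ≤ q ∧ ∃ c : ℝ, 0 < c ∧
      ∀ (β : Type) [Fintype β] (G : SimpleGraph β) (m : ℕ),
        G.edgeSet.ncard = m → 2 ≤ m →
        c * (m : ℝ) ^ ((p : ℝ) / (p + 1) - ε) ≤
          ramseyNumber (completeBipartiteGraph (Fin p) (Fin q)) G := by
  classical
  set D : ℕ := ⌈(4:ℝ)/ε⌉₊ + 1 with hDdef
  have hD1 : 1 ≤ D := Nat.le_add_left 1 _
  have hD4 : 4 / ε ≤ (D : ℝ) := by
    calc 4/ε ≤ (⌈(4:ℝ)/ε⌉₊ : ℝ) := Nat.le_ceil _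
      _ ≤ (D:ℝ) := by exact_mod_cast Nat.le_succ _
  set q : ℕ := D * (p + 2) with hqdef
  have hpq : p ≤ q := by
    calc p ≤ p + 2 := by omega
      _ = 1 * (p + 2) := (one_mul _).symm
      _ ≤ D * (p + 2) := Nat.mul_le_mul_right _ hD1
  set pD : ℕ := p * D with hpDdef
  have hpD1 : 1 ≤ pD := Nat.mul_pos (by omega) (by omega)
  set c₀ : ℝ := 1 / (pD + 1) with hc₀
  have hc₀pos : 0 < c₀ := by positivity
  have hc₀le1 : c₀ ≤ 1 := by
    rw [hc₀]
    rw [div_le_one (by positivity)]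
    have : (1:ℝ) ≤ (pD:ℝ) := by exact_mod_cast hpD1
    linarith
  set c : ℝ := c₀ / 2 ^ pD with hc
  refine ⟨q, hpq, c, by positivity, ?_⟩
  intro β _ G m hm hm2
  have hex := aux_ramseyProp_exists p q β G
  set α : ℝ := (p:ℝ)/((p:ℝ)+1) - ε with hα
  have hm1 : (1:ℝ) ≤ (m:ℝ) := by exact_mod_cast (by omega : 1 ≤ m)
  have hm0 : (0:ℝ) < (m:ℝ) := by linarith
  set x : ℝ := c₀ * (m:ℝ) ^ α with hx
  have hx0 : 0 < x := by
    rw [hx]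
    have := Real.rpow_pos_of_pos hm0 α
    positivity
  have hgoal_eq : c * (m:ℝ) ^ α = x / 2 ^ pD := by rw [hc, hx]; ring
  rw [hgoal_eq]
  by_cases hxlt : x < 1
  · have hr1 : 1 ≤ ramseyNumber (completeBipartiteGraph (Fin p) (Fin q)) G :=
      aux_one_le_ramseyNumber hex
    have hr1' : (1:ℝ) ≤ (ramseyNumber (completeBipartiteGraph (Fin p) (Fin q)) G : ℝ) := by
      exact_mod_cast hr1
    have h2pow : (1:ℝ) ≤ 2 ^ pD := one_le_pow₀ (by norm_num)
    calc x / 2 ^ pD ≤ x := div_le_self hx0.le h2pow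
      _ ≤ 1 := hxlt.le
      _ ≤ _ := hr1'
  · push_neg at hxlt
    set y : ℝ := x ^ ((pD:ℝ)⁻¹) with hy
    have hy1 : 1 ≤ y := by
      rw [hy]
      calc (1:ℝ) = 1 ^ ((pD:ℝ)⁻¹) := (Real.one_rpow _).symm
        _ ≤ x ^ ((pD:ℝ)⁻¹) := Real.rpow_le_rpow zero_le_one hxlt (by positivity)
    set ν : ℕ := ⌊y⌋₊ with hν
    have hν1 : 1 ≤ ν := Nat.le_floor (by exact_mod_cast hy1)
    have hνy : (ν:ℝ) ≤ y := Nat.floor_le (by linarith)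
    have hν1' : (1:ℝ) ≤ (ν:ℝ) := by exact_mod_cast hν1
    have hy2ν : y ≤ 2 * ν := by
      have h1 : y < ν + 1 := Nat.lt_floor_add_one y
      linarith
    set n : ℕ := ν ^ pD with hn
    have hpD0 : pD ≠ 0 := by omega
    have hypD : y ^ pD = x := by
      rw [hy]
      exact Real.rpow_inv_natCast_pow hx0.le hpD0
    have hxn : x ≤ 2 ^ pD * (n:ℝ) := by
      calc x = y ^ pD := hypD.symm
        _ ≤ (2 * (ν:ℝ)) ^ pD := pow_le_pow_left₀ (by linarith) hy2ν pD
        _ = 2 ^ pD * (ν:ℝ) ^ pD := mul_pow 2 (ν:ℝ) pD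
        _ = 2 ^ pD * (n:ℝ) := by rw [hn]; push_cast; ring
    have hxdiv : x / 2 ^ pD ≤ (n:ℝ) := by
      rw [div_le_iff₀ (by positivity)]
      calc x ≤ 2 ^ pD * (n:ℝ) := hxn
        _ = (n:ℝ) * 2 ^ pD := by ring
    suffices hlt : n < ramseyNumber (completeBipartiteGraph (Fin p) (Fin q)) G by
      have hcast : (n:ℝ) ≤ (ramseyNumber (completeBipartiteGraph (Fin p) (Fin q)) G : ℝ) := by
        exact_mod_cast hlt.le
      linarith
    apply aux_lt_ramseyNumber hex
    by_cases hsmall : n < p + q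
    · apply aux_not_ramseyProp_small hsmall G
      apply Set.nonempty_of_ncard_ne_zero
      rw [hm]; omega
    · push_neg at hsmall
      have hν2 : 2 ≤ ν := by
        by_contra hcon
        have hν1eq : ν = 1 := by omega
        rw [hn, hν1eq, one_pow] at hsmall
        omega
      have hmm : (pD + 1) * ν ^ (pD + D + 2) ≤ m := by
        have hE : (0:ℝ) < ((pD:ℕ):ℝ) := by exact_mod_cast hpD1
        have hνk : (ν:ℝ) ^ (pD + D + 2) ≤ y ^ (pD + D + 2) :=
          pow_le_pow_left₀ (by positivity) hνy _
        have hyE : y ^ (pD + D + 2) = x ^ (((pD + D + 2 : ℕ):ℝ) / ((pD:ℕ):ℝ)) := by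
          rw [hy, ← Real.rpow_natCast (x ^ ((pD:ℝ)⁻¹)) (pD + D + 2), ← Real.rpow_mul hx0.le]
          congr 1
          rw [inv_mul_eq_div]
        have hE1 : 1 ≤ ((pD + D + 2 : ℕ):ℝ) / ((pD:ℕ):ℝ) := by
          rw [le_div_iff₀ hE]
          push_cast
          linarith [hD4, hε]
        have hαE : α * (((pD + D + 2 : ℕ):ℝ) / ((pD:ℕ):ℝ)) ≤ 1 := by
          rw [hα, hpDdef]
          exact aux_alphaE p D ε hp hε hD4 hD1
        have hxE : x ^ (((pD + D + 2 : ℕ):ℝ) / ((pD:ℕ):ℝ)) ≤ c₀ * m := by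
          set E : ℝ := ((pD + D + 2 : ℕ):ℝ) / ((pD:ℕ):ℝ) with hEdef
          rw [hx, Real.mul_rpow hc₀pos.le (Real.rpow_nonneg hm0.le α)]
          have h1 : c₀ ^ E ≤ c₀ := by
            calc c₀ ^ E ≤ c₀ ^ (1:ℝ) :=
              Real.rpow_le_rpow_of_exponent_ge hc₀pos hc₀le1 hE1
              _ = c₀ := Real.rpow_one c₀
          have h2 : ((m:ℝ) ^ α) ^ E = (m:ℝ) ^ (α * E) := by
            rw [← Real.rpow_mul hm0.le]
          have h3 : (m:ℝ) ^ (α * E) ≤ (m:ℝ) ^ (1:ℝ) :=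
            Real.rpow_le_rpow_of_exponent_le hm1 hαE
          calc c₀ ^ E * ((m:ℝ) ^ α) ^ E ≤ c₀ * ((m:ℝ) ^ α) ^ E := by
                apply mul_le_mul_of_nonneg_right h1
                positivity
            _ = c₀ * (m:ℝ) ^ (α * E) := by rw [h2]
            _ ≤ c₀ * (m:ℝ) ^ (1:ℝ) := mul_le_mul_of_nonneg_left h3 hc₀pos.le
            _ = c₀ * m := by rw [Real.rpow_one]
        have hfinal : (((pD:ℕ):ℝ) + 1) * (ν:ℝ) ^ (pD + D + 2) ≤ (m:ℝ) := by
          have hνE : (ν:ℝ) ^ (pD + D + 2) ≤ c₀ * m := by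
            calc (ν:ℝ) ^ (pD + D + 2) ≤ y ^ (pD + D + 2) := hνk
              _ = x ^ (((pD + D + 2 : ℕ):ℝ) / ((pD:ℕ):ℝ)) := hyE
              _ ≤ c₀ * m := hxE
          calc (((pD:ℕ):ℝ) + 1) * (ν:ℝ) ^ (pD + D + 2)
              ≤ (((pD:ℕ):ℝ) + 1) * (c₀ * m) := by
                apply mul_le_mul_of_nonneg_left hνE (by positivity)
            _ = (m:ℝ) := by
                rw [hc₀]
                field_simp
        exact_mod_cast hfinal
      have hcc := counting_core p q D ν hp hD1 hqdef hν2 β G m hm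
        (by rw [← hpDdef, ← hn]; exact hsmall)
        (by rw [← hpDdef]; exact hmm)
      rw [← hpDdef, ← hn] at hcc
      exact hcc
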